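/- Let (X,d,μ) be an α-Ahlfors regular metric measure space. Then the following are equivalent: (a) for every ξ ∈ X and all 0 ≤ r < R ≤ diam(X), the annulus closedBall(ξ,R) ∖ B(ξ,r) is nonempty; (b) μ is (α,α)-regular, i.e. there exists C' > 0 such that in addition to Ahlfors regularity, μ(closedBall(ξ,R) ∖ B(ξ,r)) ≥ (1/C')·r^α·((R−r)/r)^α for every ξ ∈ X and all 0 < r ≤ R ≤ diam(X). -/

import Mathlib

open Metric Filter Set MeasureTheory
open scoped ENNReal Topology

noncomputable section

variable {X : Type*}

/-- `μ` is `α`-Ahlfors regular with constant `C`: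
for every `0 < r ≤ diam X`, `r^α/C ≤ μ(B(ξ,r)) ≤ C·r^α`. -/
def IsAhlforsRegularWith [MetricSpace X] [MeasurableSpace X] (μ : Measure X)
    (α C : ℝ) : Prop :=
  ∀ (ξ : X) (r : ℝ), 0 < r → ENNReal.ofReal r ≤ EMetric.diam (univ : Set X) →
    ENNReal.ofReal (r ^ α / C) ≤ μ (ball ξ r) ∧
      μ (ball ξ r) ≤ ENNReal.ofReal (C * r ^ α)

/-- Lemma: in an `α`-Ahlfors regular space, all annuli
`closedBall(ξ,R) \ B(ξ,r)` (for `0 ≤ r < R ≤ diam X`) are nonempty if and only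
if `μ` is `(α,α)`-regular, i.e. satisfies the annular lower bound
`μ(closedBall(ξ,R) \ B(ξ,r)) ≥ (1/C')·r^α·((R−r)/r)^α` for some `C' > 0`. -/
theorem annuli_nonempty_iff_regular
    [MetricSpace X] [MeasurableSpace X] [BorelSpace X]
    (μ : Measure X) (α C : ℝ) (hα : 0 < α) (hC : 0 < C)
    (hreg : IsAhlforsRegularWith μ α C) :
    (∀ (ξ : X) (r R : ℝ), 0 ≤ r → r < R →
        ENNReal.ofReal R ≤ EMetric.diam (univ : Set X) →
        (closedBall ξ R \ ball ξ r).Nonempty) ↔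
      (∃ C' : ℝ, 0 < C' ∧ ∀ (ξ : X) (r R : ℝ), 0 < r → r ≤ R →
        ENNReal.ofReal R ≤ EMetric.diam (univ : Set X) →
        ENNReal.ofReal (1 / C' * r ^ α * ((R - r) / r) ^ α) ≤
          μ (closedBall ξ R \ ball ξ r)) := by
  constructor
  · intro h
    refine ⟨(3 : ℝ) ^ α * C, by positivity, ?_⟩
    intro ξ r R hr hrR hRd
    rcases eq_or_lt_of_le hrR with rfl | hlt
    · simp [Real.zero_rpow hα.ne']
    · set ρ := (R - r) / 3 with hρdef
      have hρ : 0 < ρ := div_pos (by linarith) (by norm_num)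
      -- get a point in the smaller annulus
      obtain ⟨η, hη⟩ := h ξ (r + ρ) (R - ρ) (by positivity) (by linarith [hρ])
        (le_trans (ENNReal.ofReal_le_ofReal (by linarith)) hRd)
      have hη1 : dist η ξ ≤ R - ρ := by
        simpa [mem_closedBall] using hη.1
      have hη2 : r + ρ ≤ dist η ξ := by
        have := hη.2; simp [mem_ball] at this; linarith
      -- ball η ρ is inside the annulus
      have hsub : ball η ρ ⊆ closedBall ξ R \ ball ξ r := by
        intro ζ hζ
        rw [mem_ball] at hζ
        constructor
        · rw [mem_closedBall]
          have := dist_triangle ζ η ξ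
          linarith
        · rw [mem_ball]
          have := dist_triangle η ζ ξ
          rw [dist_comm ζ η] at hζ
          push_neg
          have : dist η ξ ≤ dist η ζ + dist ζ ξ := dist_triangle η ζ ξ
          rw [dist_comm ζ ξ] at this
          linarith
      have hb := (hreg η ρ hρ
        (le_trans (ENNReal.ofReal_le_ofReal (by linarith)) hRd)).1
      refine le_trans ?_ (le_trans hb ((measure_mono hsub)))
      apply ENNReal.ofReal_le_ofReal
      have hkey : r ^ α * ((R - r) / r) ^ α = (R - r) ^ α := by
        rw [← Real.mul_rpow hr.le (div_nonneg (by linarith) hr.le)]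
        rw [mul_div_cancel₀ _ hr.ne']
      rw [mul_assoc, hkey]
      rw [hρdef, Real.div_rpow (by linarith) (by norm_num)]
      rw [div_div, one_div, inv_mul_eq_div]
  · intro ⟨C', hC', h⟩ ξ r R hr hrR hRd
    rcases eq_or_lt_of_le hr with rfl | hrpos
    · exact ⟨ξ, by simp [mem_closedBall, hrR.le], by simp⟩
    · have hb := h ξ r R hrpos hrR.le hRd
      have hpos : 0 < 1 / C' * r ^ α * ((R - r) / r) ^ α := by
        have h1 : 0 < (R - r) / r := div_pos (by linarith) hrpos
        have h2 : 0 < r ^ α := Real.rpow_pos_of_pos hrpos α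
        have h3 : 0 < ((R - r) / r) ^ α := Real.rpow_pos_of_pos h1 α
        positivity
      have : μ (closedBall ξ R \ ball ξ r) ≠ 0 := by
        intro h0
        rw [h0] at hb
        exact (ENNReal.ofReal_pos.mpr hpos).ne' (le_antisymm hb zero_le)
      exact nonempty_of_measure_ne_zero this
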